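/- Let H be a real Hilbert space, K ⊆ H nonempty closed convex, α > 0, z ∈ H, and let S, S_h : H →L[ℝ] H be two bounded linear operators. Let u be the minimizer over K of (1/2)‖S v - z‖² + (α/2)‖v‖² and u_h the minimizer over K of (1/2)‖S_h v - z‖² + (α/2)‖v‖². Set y = S u, y_h = S_h u_h, p = S†(y - z). Then α‖u - u_h‖² + ‖y_h - S u‖²_{approx} is bounded: specifically, α‖u_h - u‖² + ‖y_h - y‖² ≤ (1/α)‖(S_h† - S†)(y - z)‖² + ‖(S_h - S) u‖². -/

import Mathlib

open RealInnerProductSpace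

lemma vi_aux
    {H : Type*} [NormedAddCommGroup H] [InnerProductSpace ℝ H]
    (K : Set H) (hKconv : Convex ℝ K)
    (α : ℝ) (hα : 0 < α) (z : H) (S : H →L[ℝ] H)
    (u : H) (hu : u ∈ K)
    (hmin : ∀ v ∈ K, (1/2) * ‖S u - z‖^2 + (α/2) * ‖u‖^2 ≤
      (1/2) * ‖S v - z‖^2 + (α/2) * ‖v‖^2) :
    ∀ v ∈ K, 0 ≤ ⟪S u - z, S v - S u⟫ + α * ⟪u, v - u⟫ := by
  intro v hv
  set w := v - u with hw
  set a : ℝ := ⟪S u - z, S w⟫ + α * ⟪u, w⟫ with ha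
  set c : ℝ := (1/2) * ‖S w‖^2 + (α/2) * ‖w‖^2 with hc
  have hkey : ∀ t : ℝ, 0 < t → t ≤ 1 → 0 ≤ t * a + t^2 * c := by
    intro t ht ht1
    have hmem : u + t • w ∈ K := by
      have := hKconv hu hv (by linarith : (0:ℝ) ≤ 1 - t) ht.le (by ring)
      have heq : (1 - t) • u + t • v = u + t • w := by
        rw [hw]; module
      rwa [heq] at this
    have h := hmin _ hmem
    have e1 : S (u + t • w) - z = (S u - z) + t • (S w) := by
      rw [map_add, map_smul]; abel
    have e2 : ‖(S u - z) + t • (S w)‖^2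
        = ‖S u - z‖^2 + 2 * (t * ⟪S u - z, S w⟫) + t^2 * ‖S w‖^2 := by
      rw [@norm_add_sq_real, real_inner_smul_right, norm_smul, mul_pow,
        Real.norm_eq_abs, sq_abs]
    have e3 : ‖u + t • w‖^2 = ‖u‖^2 + 2 * (t * ⟪u, w⟫) + t^2 * ‖w‖^2 := by
      rw [@norm_add_sq_real, real_inner_smul_right, norm_smul, mul_pow,
        Real.norm_eq_abs, sq_abs]
    rw [e1, e2] at h
    rw [e3] at h
    rw [ha, hc]
    nlinarith [h]
  have hc0 : 0 ≤ c := by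
    rw [hc]; positivity
  have ha0 : 0 ≤ a := by
    clear_value a c
    by_contra hneg
    push_neg at hneg
    set t : ℝ := min 1 ((-a) / (c + 1)) with hT
    have htle : t ≤ (-a) / (c + 1) := min_le_right _ _
    have hTle : t ≤ 1 := min_le_left _ _
    have hTpos : 0 < t := lt_min one_pos (div_pos (by linarith) (by linarith))
    clear_value t
    have h := hkey t hTpos hTle
    have h2 : t * c ≤ ((-a) / (c + 1)) * c := by
      exact mul_le_mul_of_nonneg_right htle hc0
    have h3 : ((-a) / (c + 1)) * c < -a := by
      rw [div_mul_eq_mul_div, div_lt_iff₀ (by linarith : (0:ℝ) < c + 1)]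
      nlinarith
    have h4 : 0 ≤ t * (a + t * c) := by nlinarith [h]
    have h5 : t * 0 ≤ t * (a + t * c) := by linarith
    have h6 : 0 ≤ a + t * c := le_of_mul_le_mul_left h5 hTpos
    linarith
  have heq : ⟪S u - z, S v - S u⟫ = ⟪S u - z, S w⟫ := by rw [hw, map_sub]
  rw [heq]
  rw [ha] at ha0
  linarith

theorem stmt_3
    {H : Type*} [NormedAddCommGroup H] [InnerProductSpace ℝ H] [CompleteSpace H]
    (K : Set H) (hK : K.Nonempty) (hKc : IsClosed K) (hKconv : Convex ℝ K)
    (α : ℝ) (hα : 0 < α) (z : H) (S Sh : H →L[ℝ] H)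
    (u uh : H) (hu : u ∈ K) (huh : uh ∈ K)
    (hmin : ∀ v ∈ K, (1/2) * ‖S u - z‖^2 + (α/2) * ‖u‖^2 ≤
      (1/2) * ‖S v - z‖^2 + (α/2) * ‖v‖^2)
    (hminh : ∀ v ∈ K, (1/2) * ‖Sh uh - z‖^2 + (α/2) * ‖uh‖^2 ≤
      (1/2) * ‖Sh v - z‖^2 + (α/2) * ‖v‖^2)
    (y yh : H) (hy : y = S u) (hyh : yh = Sh uh) :
    α * ‖uh - u‖^2 + ‖yh - y‖^2 ≤
      (1/α) * ‖(ContinuousLinearMap.adjoint Sh - ContinuousLinearMap.adjoint S) (y - z)‖^2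
        + ‖(Sh - S) u‖^2 := by
  have h1 := vi_aux K hKconv α hα z S u hu hmin uh huh
  have h2 := vi_aux K hKconv α hα z Sh uh huh hminh u hu
  set q : H := (ContinuousLinearMap.adjoint Sh - ContinuousLinearMap.adjoint S) (y - z)
    with hqdef
  have hqi : ⟪q, uh - u⟫ = ⟪y - z, Sh (uh - u)⟫ - ⟪y - z, S (uh - u)⟫ := by
    rw [hqdef, ContinuousLinearMap.sub_apply, inner_sub_left,
      ContinuousLinearMap.adjoint_inner_left, ContinuousLinearMap.adjoint_inner_left]
  have key : (⟪S u - z, S uh - S u⟫ + α * ⟪u, uh - u⟫)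
      + (⟪Sh uh - z, Sh u - Sh uh⟫ + α * ⟪uh, u - uh⟫)
      = -⟪q, uh - u⟫ + ⟪yh - y, (Sh - S) u⟫ - ‖yh - y‖^2 - α * ‖uh - u‖^2 := by
    rw [hqi]
    subst hy hyh
    simp only [map_sub, ContinuousLinearMap.sub_apply, inner_sub_left, inner_sub_right,
      ← real_inner_self_eq_norm_sq, mul_sub]
    ring
  have hcs1 : -⟪q, uh - u⟫ ≤ ‖q‖ * ‖uh - u‖ := by
    have h := abs_le.mp (abs_real_inner_le_norm q (uh - u))
    linarith [h.1]
  have hcs2 : ⟪yh - y, (Sh - S) u⟫ ≤ ‖yh - y‖ * ‖(Sh - S) u‖ := real_inner_le_norm _ _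
  have hmain : α * ‖uh - u‖^2 + ‖yh - y‖^2 ≤ ‖q‖ * ‖uh - u‖ + ‖yh - y‖ * ‖(Sh - S) u‖ := by
    nlinarith [h1, h2, key, hcs1, hcs2]
  have hmul : α * (α * ‖uh - u‖^2 + ‖yh - y‖^2)
      ≤ α * ((1/α) * ‖q‖^2 + ‖(Sh - S) u‖^2) := by
    have hrhs : α * ((1/α) * ‖q‖^2 + ‖(Sh - S) u‖^2) = ‖q‖^2 + α * ‖(Sh - S) u‖^2 := by
      field_simp
    rw [hrhs]
    nlinarith [sq_nonneg (‖q‖ - α * ‖uh - u‖),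
      mul_nonneg hα.le (sq_nonneg (‖yh - y‖ - ‖(Sh - S) u‖)),
      mul_le_mul_of_nonneg_left hmain hα.le]
  exact le_of_mul_le_mul_left hmul hα
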